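/- arXiv:1712.01575 — 3 statements merged into one kernel-verified Lean document; each statement's English description precedes it below -/
import Mathlib

section
/- Let F: A → B be a Galois covering and F_λ the push-down functor. If ((M_i)_{i∈I}, (γ_{ij}: M_j → M_i)) is an inverse system of A-modules such that the family {M_i} is finitely supported (i.e., the union of the supports of all M_i is finite), then F_λ(lim← M_i) ≅ lim← F_λ(M_i). -/
open CategoryTheory

attribute [local instance] Classical.decEq

/-- The fibre of a functor `F` over an object `b` of the target category. -/
def Fib {A B : Type} [SmallCategory A] [SmallCategory B] (F : A ⥤ B) (b : B) : Type :=
  {a : A // F.obj a = b}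

variable {k : Type} [Field k]
variable {A B : Type} [SmallCategory A] [SmallCategory B]
  [Preadditive A] [Preadditive B]
  [CategoryTheory.Linear k A] [CategoryTheory.Linear k B]

/-- The canonical map `⊕_{a₂/b₂} A(a₁, a₂) → B(F a₁, b₂)` induced by a functor `F`,
sending a finitely supported family `(α_{a₂})` to `Σ_{a₂/b₂} F(α_{a₂})`. -/
noncomputable def Phi (F : A ⥤ B) [F.Additive] (a₁ : A) (b₂ : B) :
    (Π₀ a₂ : Fib F b₂, (a₁ ⟶ a₂.1)) →+ (F.obj a₁ ⟶ b₂) :=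
  DFinsupp.sumAddHom fun a₂ =>
    { toFun := fun g => F.map g ≫ eqToHom a₂.2
      map_zero' := by simp
      map_add' := by intro g g'; simp [Preadditive.add_comp] }

/-- The canonical map `⊕_{a₁/b₁} A(a₁, a₂) → B(b₁, F a₂)` induced by a functor `F`,
sending a finitely supported family `(α_{a₁})` to `Σ_{a₁/b₁} F(α_{a₁})`. -/
noncomputable def Psi (F : A ⥤ B) [F.Additive] (b₁ : B) (a₂ : A) :
    (Π₀ a₁ : Fib F b₁, (a₁.1 ⟶ a₂)) →+ (b₁ ⟶ F.obj a₂) :=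
  DFinsupp.sumAddHom fun a₁ =>
    { toFun := fun g => eqToHom a₁.2.symm ≫ F.map g
      map_zero' := by simp
      map_add' := by intro g g'; simp }

/-- A `k`-linear functor `F : A ⥤ B` is a covering functor if, for all `b₁, b₂` and all
`a₁` over `b₁` (resp. `a₂` over `b₂`), the canonical maps
`⊕_{a₂/b₂} A(a₁,a₂) → B(b₁,b₂)` and `⊕_{a₁/b₁} A(a₁,a₂) → B(b₁,b₂)` are bijective. -/
def IsCovering (F : A ⥤ B) [F.Additive] : Prop :=
  (∀ (a₁ : A) (b₂ : B), Function.Bijective (Phi F a₁ b₂)) ∧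
  (∀ (b₁ : B) (a₂ : A), Function.Bijective (Psi F b₁ a₂))


/-- A (strict) action of a group `G` on the category `A`, exhibiting the functor
`F : A ⥤ B` as the Galois covering `A → A/G`: the action is `F`-invariant, free on
objects, and transitive on the fibres of `F`. -/
structure GaloisAction (G : Type) [Group G] (F : A ⥤ B) [F.Additive] : Type where
  /-- the action of `g ∈ G` by an automorphism of `A` -/
  ρ : G → A ⥤ A
  map_one : ρ 1 = Functor.id A
  map_mul : ∀ g h : G, ρ (g * h) = ρ h ⋙ ρ g
  /-- the covering is `G`-invariant: `F ∘ g = F` -/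
  invariant : ∀ g : G, ρ g ⋙ F = F
  /-- the action is free on objects -/
  free : ∀ (g : G) (a : A), (ρ g).obj a = a → g = 1
  /-- `G` acts transitively on the fibres of `F` -/
  trans : ∀ a a' : A, F.obj a = F.obj a' → ∃ g : G, (ρ g).obj a = a'

/-- For a covering functor `F`, `liftFamily` is the unique family
`{β^{a₁}_{(a₂)} : a₁ ⟶ a₂ | a₂/b₂}` (almost all zero) with `β = Σ_{a₂/b₂} F(β^{a₁}_{(a₂)})`. -/
noncomputable def liftFamily (F : A ⥤ B) [F.Additive] (h : IsCovering F)
    {b₁ b₂ : B} (β : b₁ ⟶ b₂) (a₁ : Fib F b₁) :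
    Π₀ a₂ : Fib F b₂, (a₁.1 ⟶ a₂.1) :=
  (Equiv.ofBijective _ (h.1 a₁.1 b₂)).symm (eqToHom a₁.2 ≫ β)

/-- For a covering functor `F`, `coliftFamily` is the unique family
`{β^{(a₁)}_{a₂} : a₁ ⟶ a₂ | a₁/b₁}` (almost all zero) with `β = Σ_{a₁/b₁} F(β^{(a₁)}_{a₂})`. -/
noncomputable def coliftFamily (F : A ⥤ B) [F.Additive] (h : IsCovering F)
    {b₁ b₂ : B} (β : b₁ ⟶ b₂) (a₂ : Fib F b₂) :
    Π₀ a₁ : Fib F b₁, (a₁.1 ⟶ a₂.1) :=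
  (Equiv.ofBijective _ (h.2 b₁ a₂.1)).symm (β ≫ eqToHom a₂.2.symm)

/-- The value `F_λM(b) = ⊕_{a/b} M(a)` of the push-down functor. -/
abbrev FlObj (F : A ⥤ B) (M : A ⥤ AddCommGrpCat) (b : B) : Type :=
  Π₀ a : Fib F b, ↥(M.obj a.1)

/-- The action `F_λM(β) : ⊕_{a₁/b₁} M(a₁) → ⊕_{a₂/b₂} M(a₂)` of the push-down of `M`
on `β : b₁ ⟶ b₂`, given by `(m_{a₁}) ↦ (Σ_{a₁/b₁} M(β^{a₁}_{(a₂)})(m_{a₁}))`,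
using the lifts of `β` with fixed domain. -/
noncomputable def FlMap (F : A ⥤ B) [F.Additive] (h : IsCovering F)
    (M : A ⥤ AddCommGrpCat) [M.Additive] {b₁ b₂ : B} (β : b₁ ⟶ b₂) :
    FlObj F M b₁ →+ FlObj F M b₂ :=
  DFinsupp.sumAddHom fun a₁ =>
    { toFun := fun m =>
        DFinsupp.mapRange (fun a₂ g => M.map g m)
          (fun a₂ => by show M.map 0 m = 0; rw [Functor.map_zero]; rfl) (liftFamily F h β a₁)
      map_zero' := by ext a₂; simp
      map_add' := by intro m m'; ext a₂; simp }

/-- The value `F_ρM(b) = ∏_{a/b} M(a)` of the right adjoint to restriction. -/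
abbrev FrObj (F : A ⥤ B) (M : A ⥤ AddCommGrpCat) (b : B) : Type :=
  (a : Fib F b) → ↥(M.obj a.1)

/-- The action `F_ρM(β) : ∏_{a₁/b₁} M(a₁) → ∏_{a₂/b₂} M(a₂)`, given by
`(m_{a₁}) ↦ (Σ_{a₁/b₁} M(β^{(a₁)}_{a₂})(m_{a₁}))`, using the lifts of `β` with
fixed codomain. -/
noncomputable def FrMap (F : A ⥤ B) [F.Additive] (h : IsCovering F)
    (M : A ⥤ AddCommGrpCat) [M.Additive] {b₁ b₂ : B} (β : b₁ ⟶ b₂)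
    (m : FrObj F M b₁) (a₂ : Fib F b₂) : ↥(M.obj a₂.1) :=
  DFinsupp.sumAddHom
    (fun a₁ : Fib F b₁ =>
      AddMonoidHom.mk' (fun g : a₁.1 ⟶ a₂.1 => M.map g (m a₁))
        (fun g g' => by show M.map (g + g') (m a₁) = M.map g (m a₁) + M.map g' (m a₁); rw [Functor.map_add]; rfl))
    (coliftFamily F h β a₂)

/-- The push-down `F_λ f : F_λM → F_λN` of a morphism of `A`-modules `f : M → N`,
given pointwise by `(m_a)_{a/b} ↦ (f_a(m_a))_{a/b}`. -/
noncomputable def FlHom (F : A ⥤ B) {M N : A ⥤ AddCommGrpCat} (f : M ⟶ N) (b : B) :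
    FlObj F M b →+ FlObj F N b :=
  DFinsupp.mapRange.addMonoidHom (fun a : Fib F b => ((f.app a.1).hom : ↥(M.obj a.1) →+ ↥(N.obj a.1)))

/-- Let `F : A → B` be a Galois covering with push-down functor `F_λ`.
If `(M_i)_{i ∈ I}` is an inverse system of `A`-modules whose family is finitely supported,
and `L` (with projections `π_i`) is its inverse limit (computed pointwise), then
`F_λ L` is the inverse limit of the system `(F_λ M_i)`; that is,
`F_λ (lim← M_i) ≅ lim← F_λ(M_i)`. -/
theorem stmt_6 {G : Type} [Group G] (F : A ⥤ B) [F.Additive]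
    (hcov : IsCovering F) (ga : GaloisAction G F)
    {I : Type} [Preorder I]
    (M : I → A ⥤ AddCommGrpCat) [∀ i, (M i).Additive]
    -- the transition maps of the inverse system
    (γ : ∀ {i j : I}, i ≤ j → (M j ⟶ M i))
    (hγ_id : ∀ i : I, γ (le_refl i) = 𝟙 (M i))
    (hγ_comp : ∀ {i j l : I} (hij : i ≤ j) (hjl : j ≤ l),
      γ hjl ≫ γ hij = γ (hij.trans hjl))
    -- the family (M_i) is finitely supported
    (hsupp : {a : A | ∃ i : I, ∃ m : ↥((M i).obj a), m ≠ 0}.Finite)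
    -- L is the inverse limit of the system, computed pointwise
    (L : A ⥤ AddCommGrpCat) [L.Additive] (π : ∀ i : I, L ⟶ M i)
    (hπ : ∀ {i j : I} (hij : i ≤ j), π j ≫ γ hij = π i)
    (hL_inj : ∀ (a : A) (x y : ↥(L.obj a)),
      (∀ i : I, (π i).app a x = (π i).app a y) → x = y)
    (hL_surj : ∀ (a : A) (s : ∀ i : I, ↥((M i).obj a)),
      (∀ {i j : I} (hij : i ≤ j), (γ hij).app a (s j) = s i) →
        ∃ x : ↥(L.obj a), ∀ i : I, (π i).app a x = s i) :
    -- then F_λ L, with the projections F_λ π_i, is the inverse limit of (F_λ M_i):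
    ∀ b : B,
      (∀ x y : FlObj F L b,
        (∀ i : I, FlHom F (π i) b x = FlHom F (π i) b y) → x = y) ∧
      (∀ s : ∀ i : I, FlObj F (M i) b,
        (∀ {i j : I} (hij : i ≤ j), FlHom F (γ hij) b (s j) = s i) →
          ∃ x : FlObj F L b, ∀ i : I, FlHom F (π i) b x = s i) := by
  intro b
  have happ : ∀ {P Q : A ⥤ AddCommGrpCat} (f : P ⟶ Q) (x : FlObj F P b) (a : Fib F b),
      (FlHom F f b x) a = f.app a.1 (x a) := by
    intro P Q f x a
    simp [FlHom, DFinsupp.mapRange.addMonoidHom]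
  constructor
  · intro x y hxy
    ext a
    apply hL_inj
    intro i
    have := congrArg (fun z => z a) (hxy i)
    simpa [happ] using this
  · intro s hs
    -- compatibility at each fibre point
    have hcomp : ∀ (a : Fib F b) {i j : I} (hij : i ≤ j),
        (γ hij).app a.1 (s j a) = s i a := by
      intro a i j hij
      have := congrArg (fun z => z a) (hs hij)
      simpa [happ] using this
    -- the chosen preimages
    let xa : ∀ a : Fib F b, ↥(L.obj a.1) := fun a =>
      (hL_surj a.1 (fun i => s i a) (fun {i j} hij => hcomp a hij)).choose
    have hxa : ∀ (a : Fib F b) (i : I), (π i).app a.1 (xa a) = s i a := fun a =>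
      (hL_surj a.1 (fun i => s i a) (fun {i j} hij => hcomp a hij)).choose_spec
    -- finite support
    have hT : {a : Fib F b | a.1 ∈ {a : A | ∃ i : I, ∃ m : ↥((M i).obj a), m ≠ 0}}.Finite := by
      have : {a : Fib F b | a.1 ∈ {a : A | ∃ i : I, ∃ m : ↥((M i).obj a), m ≠ 0}} =
          Subtype.val ⁻¹' {a : A | ∃ i : I, ∃ m : ↥((M i).obj a), m ≠ 0} := rfl
      rw [this]
      exact Set.Finite.preimage (Set.injOn_of_injective Subtype.val_injective) hsupp
    let T : Finset (Fib F b) := hT.toFinset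
    refine ⟨DFinsupp.mk T (fun a => xa a.1), ?_⟩
    intro i
    ext a
    rw [happ]
    by_cases ha : a ∈ T
    · rw [DFinsupp.mk_apply, dif_pos ha]
      exact hxa a i
    · rw [DFinsupp.mk_apply, dif_neg ha, map_zero]
      have ha' : ¬ ∃ i : I, ∃ m : ↥((M i).obj a.1), m ≠ 0 := by
        intro h
        exact ha (hT.mem_toFinset.mpr h)
      by_contra hne
      exact ha' ⟨i, s i a, fun h => hne h.symm⟩
end

section
/- Let ((X_i)_{i∈ℕ}, (γ_{ji}: X_j → X_i)_{j≥i}) be an inverse system of non-empty sets satisfying the Mittag-Leffler condition: for all i there exists j ≥ i such that γ_{ki}(X_k) = γ_{ji}(X_j) for all k ≥ j. Then the inverse limit lim← X_i is non-empty. -/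
/-- An inverse system `((X_i)_{i∈ℕ}, γ_{ji} : X_j → X_i)` of non-empty
sets satisfying the Mittag-Leffler condition (for every `i` there is `j ≥ i` such that
`γ_{ki}(X_k) = γ_{ji}(X_j)` for all `k ≥ j`) has non-empty inverse limit: there is a
compatible sequence `(x_i)` with `γ_{ji}(x_j) = x_i` for all `j ≥ i`. -/
theorem stmt_12 (X : ℕ → Type) (γ : ∀ {i j : ℕ}, i ≤ j → X j → X i)
    (hne : ∀ i, Nonempty (X i))
    (hid : ∀ (i : ℕ) (x : X i), γ (le_refl i) x = x)
    (hcomp : ∀ {i j l : ℕ} (hij : i ≤ j) (hjl : j ≤ l) (x : X l),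
      γ hij (γ hjl x) = γ (hij.trans hjl) x)
    (hML : ∀ i : ℕ, ∃ (j : ℕ) (hij : i ≤ j),
      ∀ (l : ℕ) (hjl : j ≤ l),
        Set.range (fun x : X l => γ (hij.trans hjl) x) =
          Set.range (fun x : X j => γ hij x)) :
    ∃ s : ∀ i, X i, ∀ (i j : ℕ) (hij : i ≤ j), γ hij (s j) = s i := by
  classical
  -- The eventual image at level `i`.
  set E : ∀ i, Set (X i) :=
    fun i => ⋂ (k : ℕ) (h : i ≤ k), Set.range (fun x : X k => γ h x) with hE
  have proof_irrel : ∀ {i j : ℕ} (h h' : i ≤ j) (x : X j), γ h x = γ h' x := by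
    intro i j h h' x
    rfl
  -- each eventual image is nonempty
  have hEne : ∀ i, ∃ x, x ∈ E i := by
    intro i
    obtain ⟨j, hij, hstab⟩ := hML i
    obtain ⟨x0⟩ := hne j
    refine ⟨γ hij x0, ?_⟩
    simp only [hE, Set.mem_iInter]
    intro k h
    rcases le_total k j with hkj | hjk
    · exact ⟨γ hkj x0, (hcomp h hkj x0).trans (proof_irrel _ _ _)⟩
    · have : γ hij x0 ∈ Set.range (fun x : X j => γ hij x) := ⟨x0, rfl⟩
      rw [← hstab k hjk] at this
      obtain ⟨z, hz⟩ := this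
      exact ⟨z, hz⟩
  -- step surjectivity of eventual images
  have hstep : ∀ i (y : X i), y ∈ E i →
      ∃ x, x ∈ E (i + 1) ∧ γ (Nat.le_succ i) x = y := by
    intro i y hy
    obtain ⟨j, hj, hstab⟩ := hML (i + 1)
    have hij : i ≤ j := (Nat.le_succ i).trans hj
    have hyj : y ∈ Set.range (fun x : X j => γ hij x) := by
      simp only [hE, Set.mem_iInter] at hy
      exact hy j hij
    obtain ⟨z, hz⟩ := hyj
    refine ⟨γ hj z, ?_, ?_⟩
    · simp only [hE, Set.mem_iInter]
      intro k h
      rcases le_total k j with hkj | hjk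
      · exact ⟨γ hkj z, (hcomp h hkj z).trans (proof_irrel _ _ _)⟩
      · have : γ hj z ∈ Set.range (fun x : X j => γ hj x) := ⟨z, rfl⟩
        rw [← hstab k hjk] at this
        obtain ⟨w, hw⟩ := this
        exact ⟨w, hw⟩
    · calc γ (Nat.le_succ i) (γ hj z) = γ ((Nat.le_succ i).trans hj) z :=
            hcomp _ _ z
        _ = y := by rw [proof_irrel ((Nat.le_succ i).trans hj) hij]; exact hz
  -- build the compatible sequence by recursion with choice
  obtain ⟨x0, hx0⟩ := hEne 0
  let t : ∀ n, {x : X n // x ∈ E n} := fun n =>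
    Nat.rec ⟨x0, hx0⟩
      (fun n p => ⟨(hstep n p.1 p.2).choose, (hstep n p.1 p.2).choose_spec.1⟩) n
  have hstep' : ∀ n, γ (Nat.le_succ n) (t (n + 1)).1 = (t n).1 := by
    intro n
    exact (hstep n (t n).1 (t n).2).choose_spec.2
  refine ⟨fun n => (t n).1, ?_⟩
  intro i j hij
  induction j with
  | zero =>
    have : i = 0 := Nat.le_zero.mp hij
    subst this
    exact hid 0 _
  | succ j ih =>
    rcases Nat.lt_or_ge i (j + 1) with h | h
    · have hij' : i ≤ j := Nat.lt_succ_iff.mp h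
      calc γ hij (t (j + 1)).1
          = γ hij' (γ (Nat.le_succ j) (t (j + 1)).1) := by
            rw [hcomp hij' (Nat.le_succ j)]
        _ = γ hij' (t j).1 := by rw [hstep' j]
        _ = (t i).1 := ih hij'
    · have : i = j + 1 := le_antisymm hij h
      subst this
      exact hid _ _
end

section
/- Let R be a finite-dimensional k-algebra, ((M_i)_{i∈ℕ}, (γ_{ji}: M_j → M_i)_{j≥i}) an inverse system of finite-dimensional right R-modules, and X a finitely presented left R-module. Then the canonical map (lim← M_i) ⊗_R X → lim← (M_i ⊗_R X) is an isomorphism. -/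
open MulOpposite

/-- `t : M → X → T` is a tensor product (universal balanced product) of the right
`R`-module `M` and the left `R`-module `X` over `R`: it is biadditive, `R`-balanced,
and universal among such maps. -/
structure IsTensorProductOver (R : Type) [Ring R] (M X T : Type)
    [AddCommGroup M] [Module Rᵐᵒᵖ M] [AddCommGroup X] [Module R X] [AddCommGroup T]
    (t : M → X → T) : Prop where
  add_left : ∀ (m m' : M) (x : X), t (m + m') x = t m x + t m' x
  add_right : ∀ (m : M) (x x' : X), t m (x + x') = t m x + t m x'
  balanced : ∀ (m : M) (r : R) (x : X), t (op r • m) x = t m (r • x)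
  universal : ∀ (C : Type) [AddCommGroup C] (c : M → X → C),
    (∀ (m m' : M) (x : X), c (m + m') x = c m x + c m' x) →
    (∀ (m : M) (x x' : X), c m (x + x') = c m x + c m x') →
    (∀ (m : M) (r : R) (x : X), c (op r • m) x = c m (r • x)) →
    ∃! φ : T →+ C, ∀ (m : M) (x : X), φ (t m x) = c m x


lemma antitone_stabilizes {k : Type} [Field k] {P : Type} [AddCommGroup P] [Module k P]
    [FiniteDimensional k P] (f : ℕ → Submodule k P) (hf : ∀ {a b : ℕ}, a ≤ b → f b ≤ f a) :
    ∃ n0 : ℕ, ∀ m, n0 ≤ m → f m = f n0 := by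
  have hne : (Set.range fun n => Module.finrank k (f n)).Nonempty := ⟨_, ⟨0, rfl⟩⟩
  obtain ⟨n0, hn0⟩ := Nat.sInf_mem hne
  refine ⟨n0, fun m hm => ?_⟩
  refine Submodule.eq_of_le_of_finrank_le (hf hm) ?_
  exact le_of_eq_of_le hn0 (Nat.sInf_le ⟨m, rfl⟩)

theorem ml_lemma {k : Type} [Field k] {N : ℕ → Type} [∀ i, AddCommGroup (N i)]
    [∀ i, Module k (N i)] [∀ i, FiniteDimensional k (N i)]
    (g : ∀ {i j : ℕ}, i ≤ j → N j →ₗ[k] N i)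
    (hg_id : ∀ (i : ℕ) (x : N i), g (le_refl i) x = x)
    (hg_comp : ∀ {i j l : ℕ} (hij : i ≤ j) (hjl : j ≤ l) (x : N l),
      g hij (g hjl x) = g (hij.trans hjl) x)
    (V : ∀ i, Submodule k (N i)) (a : ∀ i, N i)
    (hV : ∀ {i j : ℕ} (hij : i ≤ j), ∀ x ∈ V j, g hij x ∈ V i)
    (ha : ∀ {i j : ℕ} (hij : i ≤ j), g hij (a j) - a i ∈ V i) :
    ∃ s : ∀ i, N i, (∀ i, s i - a i ∈ V i) ∧
      ∀ {i j : ℕ} (hij : i ≤ j), g hij (s j) = s i := by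
  classical
  -- the affine sets
  set S : ∀ i, Set (N i) := fun i => {x | x - a i ∈ V i} with hS_def
  have haS : ∀ i, a i ∈ S i := fun i => by simp [hS_def]
  have hmapS : ∀ {i j : ℕ} (hij : i ≤ j), ∀ x ∈ S j, g hij x ∈ S i := by
    intro i j hij x hx
    have : g hij x - a i = g hij (x - a j) + (g hij (a j) - a i) := by
      rw [map_sub]; abel
    show g hij x - a i ∈ V i
    rw [this]
    exact (V i).add_mem (hV hij _ hx) (ha hij)
  have hcoset : ∀ i (x y : N i), x ∈ S i → (y ∈ S i ↔ y - x ∈ V i) := by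
    intro i x y hx
    constructor
    · intro hy
      have : y - x = (y - a i) - (x - a i) := by abel
      rw [this]; exact (V i).sub_mem hy hx
    · intro h
      show y - a i ∈ V i
      have : y - a i = (y - x) + (x - a i) := by abel
      rw [this]; exact (V i).add_mem h hx
  -- images
  set A : ∀ (i j : ℕ), i ≤ j → Set (N i) := fun i j hij => g hij '' S j with hA_def
  have hA_ne : ∀ i j (hij : i ≤ j), (A i j hij).Nonempty := fun i j hij =>
    ⟨g hij (a j), ⟨a j, haS j, rfl⟩⟩
  have hA_mono : ∀ {i j j' : ℕ} (hij : i ≤ j) (hjj' : j ≤ j'),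
      A i j' (hij.trans hjj') ⊆ A i j hij := by
    rintro i j j' hij hjj' x ⟨z, hz, rfl⟩
    exact ⟨g hjj' z, hmapS hjj' z hz, hg_comp hij hjj' z⟩
  have hA_sub : ∀ {i j : ℕ} (hij : i ≤ j) (x y : N i), x ∈ A i j hij → y ∈ A i j hij →
      x - y ∈ (V j).map (g hij) := by
    rintro i j hij x y ⟨z, hz, rfl⟩ ⟨w, hw, rfl⟩
    exact ⟨z - w, ((hcoset j w z hw).mp hz), by rw [map_sub]⟩
  have hA_mem : ∀ {i j : ℕ} (hij : i ≤ j) (x y : N i), x ∈ A i j hij →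
      y - x ∈ (V j).map (g hij) → y ∈ A i j hij := by
    rintro i j hij x y ⟨z, hz, rfl⟩ ⟨v, hv, hv'⟩
    refine ⟨z + v, ?_, by rw [map_add, hv']; abel⟩
    exact (hcoset j z (z + v) hz).mpr (by simpa using hv)
  -- proof-irrelevant congruence for the images of V
  have Wcongr : ∀ {i j j' : ℕ} (e : j = j') (h : i ≤ j) (h' : i ≤ j'),
      (V j).map (g h) = (V j').map (g h') := by
    rintro i j _ rfl h h'; rfl
  -- stabilization
  have h_stab : ∀ i : ℕ, ∃ j0, i ≤ j0 ∧ ∀ j (hj : j0 ≤ j) (h : i ≤ j) (h0 : i ≤ j0),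
      (V j).map (g h) = (V j0).map (g h0) := by
    intro i
    obtain ⟨n0, hn0⟩ := antitone_stabilizes (fun n => (V (i + n)).map (g (Nat.le_add_right i n)))
      (by
        intro p q hpq
        rintro x ⟨v, hv, rfl⟩
        refine ⟨g (by omega : i + p ≤ i + q) v, hV _ v hv, ?_⟩
        rw [hg_comp])
    refine ⟨i + n0, Nat.le_add_right i n0, fun j hj h h0 => ?_⟩
    have e1 : i + (j - i) = j := by omega
    have := hn0 (j - i) (by omega)
    calc (V j).map (g h) = (V (i + (j - i))).map (g (Nat.le_add_right i (j - i))) :=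
          Wcongr e1.symm h _
      _ = (V (i + n0)).map (g (Nat.le_add_right i n0)) := this
      _ = (V (i + n0)).map (g h0) := rfl
  choose j0 hj0le hj0 using h_stab
  -- the stable image sets coincide with A i (j0 i)
  have hA_stab : ∀ (i j : ℕ) (hj : j0 i ≤ j) (h : i ≤ j),
      A i j h = A i (j0 i) (hj0le i) := by
    intro i j hj h
    apply Set.Subset.antisymm
    · intro x hx
      exact hA_mono (hj0le i) hj hx
    · intro x hx
      obtain ⟨x', hx'⟩ := hA_ne i j h
      have hx'0 : x' ∈ A i (j0 i) (hj0le i) := hA_mono (hj0le i) hj hx'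
      have hdiff : x - x' ∈ (V j).map (g h) := by
        rw [hj0 i j hj h (hj0le i)]
        exact hA_sub (hj0le i) x x' hx hx'0
      exact hA_mem h x' x hx' hdiff
  -- the limit sets
  set TT : ∀ i, Set (N i) := fun i => {x | ∀ j (h : i ≤ j), x ∈ A i j h} with hTT_def
  have hTT_ne : ∀ i, (TT i).Nonempty := by
    intro i
    obtain ⟨x, hx⟩ := hA_ne i (j0 i) (hj0le i)
    refine ⟨x, fun j h => ?_⟩
    rcases le_total j (j0 i) with hle | hle
    · exact hA_mono h hle ((hA_stab i (j0 i) le_rfl (hj0le i)) ▸ hx)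
    · rw [hA_stab i j hle h]; exact hx
  have hTT_sub : ∀ i, TT i ⊆ S i := by
    intro i x hx
    obtain ⟨z, hz, hz'⟩ := hx i (le_refl i)
    rw [hg_id i z] at hz'; exact hz' ▸ hz
  have step : ∀ i, ∀ x ∈ TT i, ∃ y, y ∈ TT (i + 1) ∧ g (Nat.le_succ i) y = x := by
    intro i x hx
    have h1 : i ≤ j0 (i + 1) := (Nat.le_succ i).trans (hj0le (i + 1))
    obtain ⟨z, hz, hz'⟩ := hx (j0 (i + 1)) h1
    refine ⟨g (hj0le (i + 1)) z, ?_, ?_⟩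
    · intro j h
      rcases le_total j (j0 (i + 1)) with hle | hle
      · exact hA_mono h hle ⟨z, hz, rfl⟩
      · rw [hA_stab (i + 1) j hle h]
        exact ⟨z, hz, rfl⟩
    · rw [hg_comp (Nat.le_succ i) (hj0le (i + 1)) z]
      exact hz'
  -- construct the sequence
  have hchoice : ∀ i (p : {x // x ∈ TT i}), {y // y ∈ TT (i + 1) ∧ g (Nat.le_succ i) y = p.1} :=
    fun i p => ⟨Classical.choose (step i p.1 p.2), Classical.choose_spec (step i p.1 p.2)⟩
  set s0 : ∀ i, {x // x ∈ TT i} := fun i => Nat.rec ⟨(hTT_ne 0).choose, (hTT_ne 0).choose_spec⟩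
    (fun n p => ⟨(hchoice n p).1, (hchoice n p).2.1⟩) i with hs0_def
  have hconsec : ∀ i, g (Nat.le_succ i) (s0 (i + 1)).1 = (s0 i).1 := by
    intro i
    exact (hchoice i (s0 i)).2.2
  refine ⟨fun i => (s0 i).1, fun i => hTT_sub i (s0 i).2, ?_⟩
  intro i j hij
  induction hij with
  | refl => exact hg_id i _
  | @step m hm ih =>
      have : g (Nat.le.step hm : i ≤ m + 1) (s0 (m + 1)).1
          = g hm (g (Nat.le_succ m) (s0 (m + 1)).1) := by
        rw [hg_comp hm (Nat.le_succ m)]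
      rw [this, hconsec m, ih]

namespace IsTensorProductOver

variable {R : Type} [Ring R] {M X T : Type}
    [AddCommGroup M] [Module Rᵐᵒᵖ M] [AddCommGroup X] [Module R X] [AddCommGroup T]
    {t : M → X → T}

lemma zero_left (h : IsTensorProductOver R M X T t) (x : X) : t 0 x = 0 := by
  have h0 := h.add_left 0 0 x
  rw [add_zero] at h0
  exact (left_eq_add.mp h0)

lemma zero_right (h : IsTensorProductOver R M X T t) (m : M) : t m 0 = 0 := by
  have h0 := h.add_right m 0 0
  rw [add_zero] at h0
  exact (left_eq_add.mp h0)

lemma sub_left (h : IsTensorProductOver R M X T t) (m m' : M) (x : X) : t (m - m') x = t m x - t m' x := by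
  have h0 := h.add_left (m - m') m' x
  rw [sub_add_cancel] at h0
  exact eq_sub_of_add_eq h0.symm

lemma sum_left (h : IsTensorProductOver R M X T t) {ι : Type} (s : Finset ι) (m : ι → M) (x : X) :
    t (∑ i ∈ s, m i) x = ∑ i ∈ s, t (m i) x :=
  map_sum (AddMonoidHom.mk' (fun m => t m x) (fun a b => h.add_left a b x)) m s

lemma sum_right (h : IsTensorProductOver R M X T t) {ι : Type} (s : Finset ι) (m : M) (x : ι → X) :
    t m (∑ i ∈ s, x i) = ∑ i ∈ s, t m (x i) :=
  map_sum (AddMonoidHom.mk' (fun x => t m x) (fun a b => h.add_right m a b)) x s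

end IsTensorProductOver

section PresentationLemmas

variable {R : Type} [Ring R] {M X T : Type}
    [AddCommGroup M] [Module Rᵐᵒᵖ M] [AddCommGroup X] [Module R X] [AddCommGroup T]
    {t : M → X → T}

/-- writing `f r` as a combination of the images of the basis vectors -/
lemma presentation_sum {n : ℕ} (f : (Fin n → R) →ₗ[R] X) (r : Fin n → R) :
    f r = ∑ j, r j • f (Pi.single j 1) := by
  conv_lhs => rw [← Finset.univ_sum_single r]
  rw [map_sum]
  refine Finset.sum_congr rfl fun j _ => ?_
  rw [← map_smul]
  congr 1
  rw [← Pi.single_smul, smul_eq_mul, mul_one]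

theorem IsTensorProductOver.exists_rep (h : IsTensorProductOver R M X T t) {n : ℕ}
    (f : (Fin n → R) →ₗ[R] X) (hf : Function.Surjective f) (z : T) :
    ∃ m₀ : Fin n → M, ∑ j, t (m₀ j) (f (Pi.single j 1)) = z := by
  classical
  set Φ : (Fin n → M) →+ T := AddMonoidHom.mk'
      (fun m₀ => ∑ j, t (m₀ j) (f (Pi.single j 1)))
      (fun a b => by
        rw [← Finset.sum_add_distrib]
        exact Finset.sum_congr rfl fun j _ => h.add_left (a j) (b j) _) with hΦ_def
  have hmem : ∀ (m : M) (x : X), t m x ∈ Φ.range := by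
    intro m x
    obtain ⟨r, rfl⟩ := hf x
    refine ⟨fun j => op (r j) • m, ?_⟩
    show ∑ j, t (op (r j) • m) (f (Pi.single j 1)) = t m (f r)
    rw [presentation_sum f r, h.sum_right]
    exact Finset.sum_congr rfl fun j _ => h.balanced m (r j) _
  obtain ⟨φ, hφ, -⟩ := h.universal Φ.range (fun m x => ⟨t m x, hmem m x⟩)
    (fun m m' x => Subtype.ext (h.add_left m m' x))
    (fun m x x' => Subtype.ext (h.add_right m x x'))
    (fun m r x => Subtype.ext (h.balanced m r x))
  obtain ⟨φ₀, hφ₀, huniq⟩ := h.universal T t h.add_left h.add_right h.balanced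
  have h1 : Φ.range.subtype.comp φ = φ₀ := huniq _ (fun m x => by
    simp only [AddMonoidHom.coe_comp, Function.comp_apply, hφ m x, AddSubgroup.coe_subtype])
  have h2 : AddMonoidHom.id T = φ₀ := huniq _ (fun m x => rfl)
  have hfix : ((φ z : Φ.range) : T) = z := by
    have := congrArg (fun ψ : T →+ T => ψ z) (h1.trans h2.symm)
    simpa using this
  obtain ⟨m₀, hm₀⟩ := (φ z).2
  exact ⟨m₀, by rw [show (∑ j, t (m₀ j) (f (Pi.single j 1))) = Φ m₀ from rfl, hm₀, hfix]⟩

theorem IsTensorProductOver.sum_lam_zero (h : IsTensorProductOver R M X T t) {n m' : ℕ}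
    (f : (Fin n → R) →ₗ[R] X) (y : Fin m' → Fin n → R) (hy0 : ∀ p, f (y p) = 0)
    (c : Fin m' → M) :
    ∑ j, t (∑ p, op (y p j) • c p) (f (Pi.single j 1)) = 0 := by
  calc ∑ j, t (∑ p, op (y p j) • c p) (f (Pi.single j 1))
      = ∑ j, ∑ p, t (op (y p j) • c p) (f (Pi.single j 1)) :=
        Finset.sum_congr rfl fun j _ => h.sum_left _ _ _
    _ = ∑ p, ∑ j, t (c p) (y p j • f (Pi.single j 1)) := by
        rw [Finset.sum_comm]
        exact Finset.sum_congr rfl fun p _ => Finset.sum_congr rfl fun j _ =>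
          h.balanced (c p) (y p j) _
    _ = ∑ p, t (c p) (f (y p)) := by
        refine Finset.sum_congr rfl fun p _ => ?_
        rw [← h.sum_right, ← presentation_sum f (y p)]
    _ = 0 := by
        refine Finset.sum_eq_zero fun p _ => ?_
        rw [hy0 p, h.zero_right]

theorem IsTensorProductOver.exists_lam_eq (h : IsTensorProductOver R M X T t) {n m' : ℕ}
    (f : (Fin n → R) →ₗ[R] X) (hf : Function.Surjective f)
    (y : Fin m' → Fin n → R) (hy : Submodule.span R (Set.range y) = LinearMap.ker f)
    (m₀ : Fin n → M) (hm₀ : ∑ j, t (m₀ j) (f (Pi.single j 1)) = 0) :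
    ∃ c : Fin m' → M, (fun j => ∑ p, op (y p j) • c p) = m₀ := by
  classical
  set Λ : (Fin m' → M) →+ (Fin n → M) := AddMonoidHom.mk'
      (fun c => fun j => ∑ p, op (y p j) • c p)
      (fun a b => by
        funext j
        simp only [Pi.add_apply, smul_add]
        exact Finset.sum_add_distrib) with hΛ_def
  have key : ∀ r : Fin n → R, f r = 0 → ∀ m : M, (fun j => op (r j) • m) ∈ Λ.range := by
    intro r hr
    have hr' : r ∈ Submodule.span R (Set.range y) := by
      rw [hy]; exact hr
    clear hr
    induction hr' using Submodule.span_induction with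
    | mem r hrm =>
        obtain ⟨p, rfl⟩ := hrm
        intro m
        refine ⟨Pi.single p m, ?_⟩
        show (fun j => ∑ q, op (y q j) • Pi.single p m q) = fun j => op (y p j) • m
        funext j
        rw [Finset.sum_eq_single p]
        · rw [Pi.single_eq_same]
        · intro q _ hq
          rw [Pi.single_eq_of_ne hq, smul_zero]
        · intro habs
          exact absurd (Finset.mem_univ p) habs
    | zero =>
        intro m
        refine ⟨0, ?_⟩
        show (fun j => ∑ p, op (y p j) • (0 : Fin m' → M) p) = fun j => op ((0 : Fin n → R) j) • m
        funext j
        simp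
    | add r r' _ _ ihr ihr' =>
        intro m
        obtain ⟨c, hc⟩ := ihr m
        obtain ⟨c', hc'⟩ := ihr' m
        refine ⟨c + c', ?_⟩
        rw [map_add, hc, hc']
        funext j
        simp only [Pi.add_apply]
        rw [← add_smul, ← op_add]
    | smul s r _ ihr =>
        intro m
        obtain ⟨c, hc⟩ := ihr (op s • m)
        refine ⟨c, ?_⟩
        rw [hc]
        funext j
        rw [Pi.smul_apply, smul_eq_mul, op_mul, mul_smul]
  set H := Λ.range with hH_def
  set mk : (Fin n → M) →+ ((Fin n → M) ⧸ H) := QuotientAddGroup.mk' H with hmk_def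
  have hmk : ∀ (r r' : Fin n → R) (m : M), f r = f r' →
      mk (fun j => op (r j) • m) = mk (fun j => op (r' j) • m) := by
    intro r r' m hrr
    rw [QuotientAddGroup.mk'_eq_mk']
    refine ⟨-(fun j => op ((r - r') j) • m), ?_, ?_⟩
    · exact neg_mem (key (r - r') (by rw [map_sub, hrr, sub_self]) m)
    · funext j
      simp only [Pi.add_apply, Pi.neg_apply, Pi.sub_apply, op_sub, sub_smul]
      abel
  set σ : X → (Fin n → R) := Function.surjInv hf with hσ_def
  have hσ : ∀ x, f (σ x) = x := fun x => Function.surjInv_eq hf x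
  set cQ : M → X → ((Fin n → M) ⧸ H) := fun m x => mk (fun j => op (σ x j) • m) with hcQ_def
  have c_addl : ∀ (m m' : M) (x : X), cQ (m + m') x = cQ m x + cQ m' x := by
    intro m m' x
    show mk _ = mk _ + mk _
    rw [← map_add]
    exact congrArg mk (funext fun j => smul_add _ m m')
  have c_addr : ∀ (m : M) (x x' : X), cQ m (x + x') = cQ m x + cQ m x' := by
    intro m x x'
    have h1 : f (σ (x + x')) = f (σ x + σ x') := by rw [map_add, hσ, hσ, hσ]
    show mk _ = mk _ + mk _
    rw [hmk _ _ m h1, ← map_add]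
    exact congrArg mk (funext fun j => by
      simp only [Pi.add_apply, op_add, add_smul])
  have c_bal : ∀ (m : M) (r : R) (x : X), cQ (op r • m) x = cQ m (r • x) := by
    intro m r x
    have h1 : f (r • σ x) = f (σ (r • x)) := by rw [map_smul, hσ, hσ]
    show mk _ = mk _
    rw [← hmk _ _ m h1]
    exact congrArg mk (funext fun j => by
      rw [Pi.smul_apply, smul_eq_mul, op_mul, mul_smul])
  obtain ⟨θ, hθ, -⟩ := h.universal ((Fin n → M) ⧸ H) cQ c_addl c_addr c_bal
  have main : mk m₀ = 0 := by
    have h2 : θ (∑ j, t (m₀ j) (f (Pi.single j 1))) = mk m₀ := by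
      rw [map_sum]
      have heach : ∀ j, θ (t (m₀ j) (f (Pi.single j 1))) = mk (Pi.single j (m₀ j)) := by
        intro j
        rw [hθ]
        show mk _ = mk _
        rw [hmk (σ (f (Pi.single j 1))) (Pi.single j (1 : R)) (m₀ j) (by rw [hσ])]
        refine congrArg mk (funext fun j' => ?_)
        rcases eq_or_ne j' j with rfl | hne
        · rw [Pi.single_eq_same, Pi.single_eq_same, op_one, one_smul]
        · rw [Pi.single_eq_of_ne hne, Pi.single_eq_of_ne hne, op_zero, zero_smul]
      rw [Finset.sum_congr rfl (fun j _ => heach j), ← map_sum]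
      congr 1
      exact Finset.univ_sum_single m₀
    rw [hm₀, map_zero] at h2
    exact h2.symm
  have hmem : m₀ ∈ H := by
    rwa [← QuotientAddGroup.eq_zero_iff m₀]
  obtain ⟨c, hc⟩ := hmem
  exact ⟨c, hc⟩

end PresentationLemmas

/-- Let `R` be a finite-dimensional `k`-algebra,
`((M_i)_{i∈ℕ}, γ_{ji})` an inverse system of finite-dimensional right `R`-modules with
inverse limit `L` (with projections `π_i`, computed as compatible sequences), and `X` a
finitely presented left `R`-module.  Then the canonical map
`(lim← M_i) ⊗_R X → lim← (M_i ⊗_R X)` is an isomorphism.  (Tensor products are encoded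
by their universal property; the canonical map is encoded by the induced maps `ψ_i`.) -/
theorem stmt_14 (k : Type) [Field k] (R : Type) [Ring R] [Algebra k R]
    [FiniteDimensional k R]
    -- the inverse system of finite-dimensional right R-modules
    (M : ℕ → Type) [∀ i, AddCommGroup (M i)] [∀ i, Module Rᵐᵒᵖ (M i)]
    [∀ i, Module k (M i)] [∀ i, IsScalarTower k Rᵐᵒᵖ (M i)]
    [∀ i, FiniteDimensional k (M i)]
    (γ : ∀ {i j : ℕ}, i ≤ j → M j →ₗ[Rᵐᵒᵖ] M i)
    (hγ_id : ∀ (i : ℕ) (m : M i), γ (le_refl i) m = m)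
    (hγ_comp : ∀ {i j l : ℕ} (hij : i ≤ j) (hjl : j ≤ l) (m : M l),
      γ hij (γ hjl m) = γ (hij.trans hjl) m)
    -- X is a finitely presented left R-module
    (X : Type) [AddCommGroup X] [Module R X] [Module.FinitePresentation R X]
    -- L is the inverse limit of the system (M_i)
    (L : Type) [AddCommGroup L] [Module Rᵐᵒᵖ L] (π : ∀ i : ℕ, L →ₗ[Rᵐᵒᵖ] M i)
    (hπ : ∀ {i j : ℕ} (hij : i ≤ j) (u : L), γ hij (π j u) = π i u)
    (hL_inj : ∀ u v : L, (∀ i, π i u = π i v) → u = v)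
    (hL_surj : ∀ s : ∀ i, M i, (∀ {i j : ℕ} (hij : i ≤ j), γ hij (s j) = s i) →
      ∃ u : L, ∀ i, π i u = s i)
    -- T i is the tensor product M i ⊗_R X, and TL is L ⊗_R X
    (T : ℕ → Type) [∀ i, AddCommGroup (T i)] (t : ∀ i, M i → X → T i)
    (ht : ∀ i, IsTensorProductOver R (M i) X (T i) (t i))
    (TL : Type) [AddCommGroup TL] (tL : L → X → TL)
    (htL : IsTensorProductOver R L X TL tL)
    -- the maps induced by γ and π on the tensor products
    (δ : ∀ {i j : ℕ}, i ≤ j → T j →+ T i)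
    (hδ : ∀ {i j : ℕ} (hij : i ≤ j) (m : M j) (x : X),
      δ hij (t j m x) = t i (γ hij m) x)
    (ψ : ∀ i : ℕ, TL →+ T i)
    (hψ : ∀ (i : ℕ) (u : L) (x : X), ψ i (tL u x) = t i (π i u) x) :
    -- then the canonical map (lim← M_i) ⊗ X → lim← (M_i ⊗ X) is bijective:
    (∀ u v : TL, (∀ i, ψ i u = ψ i v) → u = v) ∧
    (∀ s : ∀ i, T i, (∀ {i j : ℕ} (hij : i ≤ j), δ hij (s j) = s i) →
      ∃ u : TL, ∀ i, ψ i u = s i) := by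
  classical
  -- a finite presentation of X
  obtain ⟨n, f, hf⟩ := Module.Finite.exists_fin' R X
  obtain ⟨m', y, hy⟩ :=
    Submodule.fg_iff_exists_fin_generating_family.mp (Module.FinitePresentation.fg_ker f hf)
  have hy0 : ∀ p, f (y p) = 0 := fun p => by
    have : y p ∈ LinearMap.ker f := by rw [← hy]; exact Submodule.subset_span ⟨p, rfl⟩
    exact this
  -- componentwise transition maps, k-linearly
  let gpi : ∀ (d : ℕ) {i j : ℕ}, i ≤ j → ((Fin d → M j) →ₗ[k] (Fin d → M i)) :=
    fun d {i j} hij => LinearMap.pi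
      (fun p => ((γ hij).restrictScalars k).comp (LinearMap.proj p))
  have gpi_apply : ∀ (d : ℕ) {i j : ℕ} (hij : i ≤ j) (c : Fin d → M j) (p : Fin d),
      gpi d hij c p = γ hij (c p) := fun d {i j} hij c p => rfl
  -- the relation map, k-linearly
  let Λk : ∀ i : ℕ, (Fin m' → M i) →ₗ[k] (Fin n → M i) := fun i =>
    { toFun := fun c => fun j => ∑ p, op (y p j) • c p
      map_add' := fun a b => by
        funext j
        simp only [Pi.add_apply, smul_add]
        exact Finset.sum_add_distrib
      map_smul' := fun a c => by
        funext j
        simp only [Pi.smul_apply, RingHom.id_apply, Finset.smul_sum]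
        exact Finset.sum_congr rfl fun p _ => smul_comm _ _ _ }
  have Λk_apply : ∀ (i : ℕ) (c : Fin m' → M i) (j : Fin n),
      Λk i c j = ∑ p, op (y p j) • c p := fun i c j => rfl
  -- Λ commutes with the transition maps
  have hΛγ : ∀ {i j : ℕ} (hij : i ≤ j) (c : Fin m' → M j),
      Λk i (gpi m' hij c) = gpi n hij (Λk j c) := by
    intro i j hij c
    funext jj
    rw [Λk_apply, gpi_apply, Λk_apply, map_sum]
    exact Finset.sum_congr rfl fun p _ => ((γ hij).map_smul (op (y p jj)) (c p)).symm
  -- ψ and δ on standard sums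
  have hψΦ : ∀ (i : ℕ) (m₀ : Fin n → L),
      ψ i (∑ j, tL (m₀ j) (f (Pi.single j 1))) = ∑ j, t i (π i (m₀ j)) (f (Pi.single j 1)) := by
    intro i m₀
    rw [map_sum]
    exact Finset.sum_congr rfl fun j _ => hψ i _ _
  have hδΦ : ∀ {i j : ℕ} (hij : i ≤ j) (b : Fin n → M j),
      δ hij (∑ jj, t j (b jj) (f (Pi.single jj 1)))
        = ∑ jj, t i (γ hij (b jj)) (f (Pi.single jj 1)) := by
    intro i j hij b
    rw [map_sum]
    exact Finset.sum_congr rfl fun jj _ => hδ hij _ _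
  constructor
  · -- injectivity
    intro u v huv
    have hw : ∀ i, ψ i (u - v) = 0 := fun i => by rw [map_sub, huv i, sub_self]
    obtain ⟨m₀, hm₀⟩ := htL.exists_rep f hf (u - v)
    have hzero : ∀ i, ∑ j, t i (π i (m₀ j)) (f (Pi.single j 1)) = 0 := fun i => by
      rw [← hψΦ i m₀, hm₀, hw i]
    have hsol : ∀ i, ∃ c : Fin m' → M i, Λk i c = fun j => π i (m₀ j) := fun i => by
      obtain ⟨c, hc⟩ := (ht i).exists_lam_eq f hf y hy _ (hzero i)
      exact ⟨c, hc⟩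
    choose a ha using hsol
    obtain ⟨s, hsV, hscompat⟩ := ml_lemma (N := fun i => Fin m' → M i)
      (fun {i j} hij => gpi m' hij)
      (fun i x => funext fun p => hγ_id i (x p))
      (fun {i j l} hij hjl x => funext fun p => hγ_comp hij hjl (x p))
      (fun i => LinearMap.ker (Λk i)) a
      (by
        intro i j hij x hx
        have hx' : Λk j x = 0 := hx
        show gpi m' hij x ∈ LinearMap.ker (Λk i)
        rw [LinearMap.mem_ker, hΛγ hij x, hx', map_zero])
      (by
        intro i j hij
        rw [LinearMap.mem_ker, map_sub, hΛγ hij (a j), ha j, ha i]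
        have : gpi n hij (fun jj => π j (m₀ jj)) = fun jj => π i (m₀ jj) :=
          funext fun jj => by rw [gpi_apply, hπ hij]
        rw [this, sub_self])
    have hsolΛ : ∀ i, Λk i (s i) = fun j => π i (m₀ j) := by
      intro i
      have h1 : Λk i (s i - a i) = 0 := hsV i
      have : Λk i (s i) = Λk i (a i) + Λk i (s i - a i) := by
        rw [← map_add, add_sub_cancel]
      rw [this, h1, add_zero, ha i]
    have hlift : ∀ p : Fin m', ∃ e : L, ∀ i, π i e = s i p := by
      intro p
      refine hL_surj (fun i => s i p) ?_
      intro i j hij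
      exact congrFun (hscompat hij) p
    choose e he using hlift
    have hfinal : ∀ jj : Fin n, (∑ p, op (y p jj) • e p) = m₀ jj := by
      intro jj
      refine hL_inj _ _ fun i => ?_
      rw [map_sum]
      have : ∀ p, π i (op (y p jj) • e p) = op (y p jj) • s i p := fun p => by
        rw [map_smul, he p i]
      rw [Finset.sum_congr rfl fun p _ => this p]
      exact congrFun (hsolΛ i) jj
    have hzero' : u - v = 0 := by
      rw [← hm₀]
      have : ∀ j ∈ Finset.univ, tL (m₀ j) (f (Pi.single j 1))
          = tL (∑ p, op (y p j) • e p) (f (Pi.single j 1)) := fun j _ => by rw [hfinal j]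
      rw [Finset.sum_congr rfl this]
      exact htL.sum_lam_zero f y hy0 e
    exact sub_eq_zero.mp hzero'
  · -- surjectivity
    intro s hs
    have hrep : ∀ i, ∃ b : Fin n → M i, ∑ j, t i (b j) (f (Pi.single j 1)) = s i :=
      fun i => (ht i).exists_rep f hf (s i)
    choose b hb using hrep
    have hcomp : ∀ {i j : ℕ} (hij : i ≤ j),
        ∃ c : Fin m' → M i, Λk i c = (fun jj => γ hij (b j jj)) - b i := by
      intro i j hij
      have hzero : ∑ jj, t i (((fun jj => γ hij (b j jj)) - b i) jj) (f (Pi.single jj 1)) = 0 := by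
        have h1 : ∀ jj ∈ Finset.univ, t i (((fun jj => γ hij (b j jj)) - b i) jj) (f (Pi.single jj 1))
            = t i (γ hij (b j jj)) (f (Pi.single jj 1)) - t i (b i jj) (f (Pi.single jj 1)) :=
          fun jj _ => (ht i).sub_left _ _ _
        rw [Finset.sum_congr rfl h1, Finset.sum_sub_distrib, ← hδΦ hij (b j), hb j, hs hij,
          ← hb i, sub_self]
      obtain ⟨c, hc⟩ := (ht i).exists_lam_eq f hf y hy _ hzero
      exact ⟨c, hc⟩
    obtain ⟨s', hs'V, hs'compat⟩ := ml_lemma (N := fun i => Fin n → M i)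
      (fun {i j} hij => gpi n hij)
      (fun i x => funext fun p => hγ_id i (x p))
      (fun {i j l} hij hjl x => funext fun p => hγ_comp hij hjl (x p))
      (fun i => LinearMap.range (Λk i)) b
      (by
        rintro i j hij x ⟨c, rfl⟩
        exact ⟨gpi m' hij c, hΛγ hij c⟩)
      (by
        intro i j hij
        obtain ⟨c, hc⟩ := hcomp hij
        exact ⟨c, hc⟩)
    have hlift : ∀ jj : Fin n, ∃ e : L, ∀ i, π i e = s' i jj := by
      intro jj
      refine hL_surj (fun i => s' i jj) ?_
      intro i j hij
      exact congrFun (hs'compat hij) jj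
    choose e he using hlift
    refine ⟨∑ jj, tL (e jj) (f (Pi.single jj 1)), fun i => ?_⟩
    rw [hψΦ i e]
    have h1 : ∀ jj ∈ Finset.univ, t i (π i (e jj)) (f (Pi.single jj 1))
        = t i (s' i jj) (f (Pi.single jj 1)) := fun jj _ => by rw [he jj i]
    rw [Finset.sum_congr rfl h1]
    obtain ⟨c, hc⟩ := hs'V i
    have h2 : ∀ jj ∈ Finset.univ, t i (s' i jj) (f (Pi.single jj 1))
        = t i (b i jj) (f (Pi.single jj 1)) + t i (Λk i c jj) (f (Pi.single jj 1)) := by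
      intro jj _
      have : s' i jj = b i jj + Λk i c jj := by
        rw [hc]
        simp only [Pi.sub_apply]
        abel
      rw [this, (ht i).add_left]
    rw [Finset.sum_congr rfl h2, Finset.sum_add_distrib, hb i]
    have h3 : ∑ jj, t i (Λk i c jj) (f (Pi.single jj 1)) = 0 := (ht i).sum_lam_zero f y hy0 c
    rw [h3, add_zero]
end
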